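/- Let 𝒯 be a well-founded B-tree and suppose for each t ∈ 𝒯 the set ℰ_t(𝒯) = {s ∈ MAX(𝒯) : t ⪯ s} is covered as ℰ_t(𝒯) = 𝒞⁰_t ∪ 𝒞¹_t. Then for j ∈ {0,1} there exist ordinals ξ_j with ξ_0 ⊕ ξ_1 = o(𝒯) (Hessenberg sum) and extended order preserving maps (i_j, e_j) : 𝒯_{ξ_j} → 𝒯 such that for every maximal t ∈ 𝒯_{ξ_j}, e_j(t) ∈ ⋂_{k=1}^{|t|} 𝒞^j_{i_j(t|_k)}. -/

import Mathlib

open Ordinal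

/-- `s` is a proper initial segment of `t`. -/
def ProperPrefix {S : Type*} (s t : List S) : Prop := s <+: t ∧ s ≠ t

/-- The maximal elements of a set of finite sequences with respect to the
proper-initial-segment order. -/
def maxElems {S : Type*} (T : Set (List S)) : Set (List S) :=
  {t ∈ T | ¬ ∃ u ∈ T, ProperPrefix t u}

/-- The derived tree: remove the maximal elements. -/
def derivTree {S : Type*} (T : Set (List S)) : Set (List S) :=
  {t ∈ T | ∃ u ∈ T, ProperPrefix t u}

/-- Transfinite iterates of the derivation: `d^0 T = T`, `d^(ξ+1) T = (d^ξ T)'`,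
and intersections at limit stages. -/
noncomputable def derivIter {S : Type*} (T : Set (List S)) (ξ : Ordinal) : Set (List S) :=
  Ordinal.limitRecOn ξ T (fun _ ih => derivTree ih)
    (fun o _ ih => ⋂ (ζ : Set.Iio o), ih ζ.1 ζ.2)

/-- A tree on `S`: a set of finite sequences closed under initial segments. -/
def IsTree {S : Type*} (T : Set (List S)) : Prop :=
  ∀ ⦃s t : List S⦄, s <+: t → t ∈ T → s ∈ T

/-- A `B`-tree on `S`: a set of nonempty finite sequences which becomes a tree
after adjoining the empty sequence. -/
def IsBTree {S : Type*} (T : Set (List S)) : Prop :=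
  [] ∉ T ∧ ∀ ⦃s t : List S⦄, s ≠ [] → s <+: t → t ∈ T → s ∈ T

/-- `T` has order exactly `ξ`: `ξ` is the least ordinal whose derived tree is empty. -/
def hasOrder {S : Type*} (T : Set (List S)) (ξ : Ordinal) : Prop :=
  derivIter T ξ = ∅ ∧ ∀ ζ < ξ, derivIter T ζ ≠ ∅

/-- The minimal trees: `𝒯_0 = ∅`, `𝒯_(ξ+1) = {(ξ+1)} ∪ {(ξ+1)⌢t : t ∈ 𝒯_ξ}`,
and `𝒯_λ = ⋃_(ζ<λ) 𝒯_(ζ+1)` at limits. -/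
noncomputable def minTree (ξ : Ordinal) : Set (List Ordinal) :=
  Ordinal.limitRecOn ξ ∅
    (fun ζ ih => {l : List Ordinal | l = [Order.succ ζ] ∨ ∃ t ∈ ih, l = Order.succ ζ :: t})
    (fun o ho ih => ⋃ (ζ : Set.Iio o), ih (Order.succ ζ.1) (ho.succ_lt ζ.2))

universe u

/-- Natural (Hessenberg) sum of ordinals, as formerly in Mathlib's `Ordinal.nadd`. -/
noncomputable def Ordinal.nadd (a b : Ordinal.{u}) : Ordinal.{u} :=
  max (⨆ x : Set.Iio a, Order.succ (Ordinal.nadd x.1 b))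
    (⨆ x : Set.Iio b, Order.succ (Ordinal.nadd a x.1))
termination_by (a, b)
decreasing_by
  · exact Prod.Lex.left _ _ x.2
  · exact Prod.Lex.right _ x.2

infixl:65 " ♯ " => Ordinal.nadd

theorem Ordinal.zero_le (a : Ordinal) : 0 ≤ a := _root_.zero_le

theorem Ordinal.not_lt_zero (a : Ordinal) : ¬ a < 0 := _root_.not_lt_zero

theorem Ordinal.le_zero {a : Ordinal} : a ≤ 0 ↔ a = 0 := nonpos_iff_eq_zero

theorem Ordinal.lt_nadd_iff {a b c : Ordinal.{u}} :
    a < b ♯ c ↔ (∃ b' < b, a ≤ b' ♯ c) ∨ ∃ c' < c, a ≤ b ♯ c' := by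
  rw [Ordinal.nadd, lt_max_iff, Ordinal.lt_iSup_iff, Ordinal.lt_iSup_iff]
  simp only [Order.lt_succ_iff, Subtype.exists, Set.mem_Iio, exists_prop]

theorem Ordinal.nadd_le_iff {a b c : Ordinal.{u}} :
    b ♯ c ≤ a ↔ (∀ b' < b, b' ♯ c < a) ∧ ∀ c' < c, b ♯ c' < a := by
  rw [Ordinal.nadd, max_le_iff, Ordinal.iSup_le_iff, Ordinal.iSup_le_iff]
  simp only [Order.succ_le_iff, Subtype.forall, Set.mem_Iio]

theorem Ordinal.nadd_lt_nadd_left {b c : Ordinal.{u}} (h : b < c) (a : Ordinal.{u}) :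
    a ♯ b < a ♯ c :=
  Ordinal.lt_nadd_iff.2 (Or.inr ⟨b, h, le_rfl⟩)

theorem Ordinal.nadd_lt_nadd_right {b c : Ordinal.{u}} (h : b < c) (a : Ordinal.{u}) :
    b ♯ a < c ♯ a :=
  Ordinal.lt_nadd_iff.2 (Or.inl ⟨b, h, le_rfl⟩)

theorem Ordinal.nadd_le_nadd_left {b c : Ordinal.{u}} (h : b ≤ c) (a : Ordinal.{u}) :
    a ♯ b ≤ a ♯ c := by
  rcases lt_or_eq_of_le h with h | rfl
  · exact (Ordinal.nadd_lt_nadd_left h a).le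
  · exact le_rfl

theorem Ordinal.nadd_le_nadd_right {b c : Ordinal.{u}} (h : b ≤ c) (a : Ordinal.{u}) :
    b ♯ a ≤ c ♯ a := by
  rcases lt_or_eq_of_le h with h | rfl
  · exact (Ordinal.nadd_lt_nadd_right h a).le
  · exact le_rfl

theorem Ordinal.nadd_le_nadd {a b c d : Ordinal.{u}} (h1 : a ≤ b) (h2 : c ≤ d) :
    a ♯ c ≤ b ♯ d :=
  (Ordinal.nadd_le_nadd_left h2 a).trans (Ordinal.nadd_le_nadd_right h1 d)

theorem Ordinal.nadd_zero (a : Ordinal.{u}) : a ♯ 0 = a := by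
  induction a using Ordinal.induction with
  | h a ih =>
    apply le_antisymm
    · rw [Ordinal.nadd_le_iff]
      refine ⟨fun b' hb' => by rw [ih b' hb']; exact hb',
        fun c' hc' => absurd hc' (Ordinal.not_lt_zero c')⟩
    · refine le_of_forall_lt fun c hc => ?_
      rw [← ih c hc]
      exact Ordinal.nadd_lt_nadd_right hc 0

theorem Ordinal.zero_nadd (a : Ordinal.{u}) : 0 ♯ a = a := by
  induction a using Ordinal.induction with
  | h a ih =>
    apply le_antisymm
    · rw [Ordinal.nadd_le_iff]
      refine ⟨fun c' hc' => absurd hc' (Ordinal.not_lt_zero c'),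
        fun b' hb' => by rw [ih b' hb']; exact hb'⟩
    · refine le_of_forall_lt fun c hc => ?_
      rw [← ih c hc]
      exact Ordinal.nadd_lt_nadd_left hc 0

theorem Ordinal.succ_nadd (a b : Ordinal.{u}) : Order.succ a ♯ b = Order.succ (a ♯ b) := by
  induction b using Ordinal.induction with
  | h b ih =>
    apply le_antisymm
    · rw [Ordinal.nadd_le_iff]
      refine ⟨fun a' ha' => Order.lt_succ_iff.2
        (Ordinal.nadd_le_nadd_right (Order.lt_succ_iff.1 ha') b), fun b' hb' => ?_⟩
      rw [ih b' hb']
      exact Order.succ_lt_succ (Ordinal.nadd_lt_nadd_left hb' a)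
    · exact Order.succ_le_of_lt (Ordinal.nadd_lt_nadd_right (Order.lt_succ a) b)

theorem Ordinal.nadd_succ (a b : Ordinal.{u}) : a ♯ Order.succ b = Order.succ (a ♯ b) := by
  induction a using Ordinal.induction with
  | h a ih =>
    apply le_antisymm
    · rw [Ordinal.nadd_le_iff]
      refine ⟨fun a' ha' => ?_, fun b' hb' => Order.lt_succ_iff.2
        (Ordinal.nadd_le_nadd_left (Order.lt_succ_iff.1 hb') a)⟩
      rw [ih a' ha']
      exact Order.succ_lt_succ (Ordinal.nadd_lt_nadd_right ha' b)
    · exact Order.succ_le_of_lt (Ordinal.nadd_lt_nadd_left (Order.lt_succ b) a)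

namespace ColoringSumsProof

variable {S : Type*}

/-! ### Prefix helpers -/

theorem pp_length {s t : List S} (h : ProperPrefix s t) : s.length < t.length := by
  rcases h with ⟨h1, h2⟩
  rcases lt_or_eq_of_le h1.length_le with h | h
  · exact h
  · exact absurd (List.IsPrefix.eq_of_length h1 h) h2

theorem pp_trans_le {s t u : List S} (h : ProperPrefix s t) (h2 : t <+: u) :
    ProperPrefix s u := by
  refine ⟨h.1.trans h2, fun he => ?_⟩
  subst he
  exact absurd (h2.length_le) (not_le.2 (pp_length h))

theorem le_trans_pp {s t u : List S} (h : s <+: t) (h2 : ProperPrefix t u) :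
    ProperPrefix s u := by
  refine ⟨h.trans h2.1, fun he => ?_⟩
  subst he
  exact absurd (h.length_le) (not_le.2 (pp_length h2))

theorem pp_trans {s t u : List S} (h : ProperPrefix s t) (h2 : ProperPrefix t u) :
    ProperPrefix s u := pp_trans_le h h2.1

theorem pp_cons {a : S} {s t : List S} :
    ProperPrefix (a :: s) (a :: t) ↔ ProperPrefix s t := by
  constructor
  · rintro ⟨h1, h2⟩
    rw [List.cons_prefix_cons] at h1
    exact ⟨h1.2, fun he => h2 (by rw [he])⟩
  · rintro ⟨h1, h2⟩
    exact ⟨List.cons_prefix_cons.2 ⟨rfl, h1⟩, fun he => h2 (by injection he)⟩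

theorem prefix_single {a : S} {s : List S} (h : s <+: [a]) : s = [] ∨ s = [a] := by
  cases s with
  | nil => exact Or.inl rfl
  | cons b s' =>
    rw [List.cons_prefix_cons] at h
    rcases h with ⟨rfl, h2⟩
    rcases List.prefix_nil.1 h2 with rfl
    exact Or.inr rfl

theorem pp_of_lt_le {t u x : List S} (h : ProperPrefix t u) (h2 : u <+: x) :
    ProperPrefix t x := pp_trans_le h h2

/-! ### derivIter basics -/

@[elab_as_elim]
theorem limInd {motive : Ordinal → Prop} (o : Ordinal) (H₁ : motive 0)
    (H₂ : ∀ o, motive o → motive (Order.succ o))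
    (H₃ : ∀ o, Order.IsSuccLimit o → (∀ o' < o, motive o') → motive o) : motive o :=
  Ordinal.limitRecOn o H₁ (fun o ih => by rw [Ordinal.add_one_eq_succ]; exact H₂ o ih) H₃

theorem derivTree_subset (T : Set (List S)) : derivTree T ⊆ T := fun _ h => h.1

theorem derivTree_mono {A B : Set (List S)} (h : A ⊆ B) : derivTree A ⊆ derivTree B := by
  rintro t ⟨ht, u, hu, hpp⟩
  exact ⟨h ht, u, h hu, hpp⟩

theorem derivIter_zero (T : Set (List S)) : derivIter T 0 = T :=
  Ordinal.limitRecOn_zero _ _ _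

theorem derivIter_succ (T : Set (List S)) (ξ : Ordinal) :
    derivIter T (Order.succ ξ) = derivTree (derivIter T ξ) :=
  Ordinal.limitRecOn_succ _ _ _ _

theorem derivIter_limit (T : Set (List S)) {ξ : Ordinal} (h : Order.IsSuccLimit ξ) :
    derivIter T ξ = ⋂ (ζ : Set.Iio ξ), derivIter T ζ.1 :=
  Ordinal.limitRecOn_limit _ _ _ _ h

theorem derivIter_mono {A B : Set (List S)} (h : A ⊆ B) (ξ : Ordinal) :
    derivIter A ξ ⊆ derivIter B ξ := by
  induction ξ using limInd with
  | H₁ => rw [derivIter_zero, derivIter_zero]; exact h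
  | H₂ ξ ih => rw [derivIter_succ, derivIter_succ]; exact derivTree_mono ih
  | H₃ ξ hξ ih =>
    rw [derivIter_limit _ hξ, derivIter_limit _ hξ]
    exact Set.iInter_mono fun ζ => ih ζ.1 ζ.2

theorem derivIter_antitone (T : Set (List S)) {ζ ξ : Ordinal} (h : ζ ≤ ξ) :
    derivIter T ξ ⊆ derivIter T ζ := by
  induction ξ using limInd with
  | H₁ => rw [Ordinal.le_zero.1 h]
  | H₂ ξ ih =>
    rcases (Order.le_succ_iff_eq_or_le.1 h) with rfl | h
    · exact le_rfl
    · rw [derivIter_succ]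
      exact (derivTree_subset _).trans (ih h)
  | H₃ ξ hξ ih =>
    rcases eq_or_lt_of_le h with rfl | h
    · exact le_rfl
    · rw [derivIter_limit _ hξ]
      exact Set.iInter_subset_of_subset ⟨ζ, h⟩ le_rfl

theorem derivIter_subset (T : Set (List S)) (ξ : Ordinal) : derivIter T ξ ⊆ T := by
  simpa [derivIter_zero] using derivIter_antitone T (Ordinal.zero_le ξ)

theorem mem_derivIter_limit {T : Set (List S)} {ξ : Ordinal} (h : Order.IsSuccLimit ξ)
    {t : List S} : t ∈ derivIter T ξ ↔ ∀ ζ < ξ, t ∈ derivIter T ζ := by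
  rw [derivIter_limit T h, Set.mem_iInter]
  exact ⟨fun H ζ hζ => H ⟨ζ, hζ⟩, fun H ζ => H ζ.1 ζ.2⟩

/-- Downward closure of derivation stages of a B-tree. -/
theorem derivIter_closed {T : Set (List S)} (hT : IsBTree T) (ξ : Ordinal) :
    ∀ s t : List S, s ≠ [] → s <+: t → t ∈ derivIter T ξ → s ∈ derivIter T ξ := by
  induction ξ using limInd with
  | H₁ => intro s t hs hst ht; rw [derivIter_zero] at *; exact hT.2 hs hst ht
  | H₂ ξ ih =>
    intro s t hs hst ht
    rw [derivIter_succ] at *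
    obtain ⟨ht1, u, hu, hpp⟩ := ht
    by_cases he : s = t
    · subst he; exact ⟨ht1, u, hu, hpp⟩
    · exact ⟨ih s t hs hst ht1, t, ht1, ⟨hst, he⟩⟩
  | H₃ ξ hξ ih =>
    intro s t hs hst ht
    rw [mem_derivIter_limit hξ] at *
    exact fun ζ hζ => ih ζ hζ s t hs hst (ht ζ hζ)

/-- A proper prefix of an element of the `ξ`-th derivative lies in the `ξ+1`-st. -/
theorem derivIter_step {T : Set (List S)} (hT : IsBTree T) {ξ : Ordinal}
    {s t : List S} (hs : s ≠ []) (hst : ProperPrefix s t) (ht : t ∈ derivIter T ξ) :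
    s ∈ derivIter T (Order.succ ξ) := by
  rw [derivIter_succ]
  exact ⟨derivIter_closed hT ξ s t hs hst.1 ht, t, ht, hst⟩

/-- Pushforward of derivation stages along an order preserving map. -/
theorem derivIter_push {U : Set (List S)} {S' : Type*} {T : Set (List S')}
    (f : List S → List S')
    (h1 : ∀ t ∈ U, f t ∈ T)
    (h2 : ∀ s ∈ U, ∀ t ∈ U, ProperPrefix s t → ProperPrefix (f s) (f t)) (ξ : Ordinal) :
    ∀ t ∈ derivIter U ξ, f t ∈ derivIter T ξ := by
  induction ξ using limInd with
  | H₁ => intro t ht; rw [derivIter_zero] at *; exact h1 t ht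
  | H₂ ξ ih =>
    intro t ht
    rw [derivIter_succ] at *
    obtain ⟨ht1, u, hu, hpp⟩ := ht
    have htU := derivIter_subset U ξ ht1
    have huU := derivIter_subset U ξ hu
    exact ⟨ih t ht1, f u, ih u hu, h2 t htU u huU hpp⟩
  | H₃ ξ hξ ih =>
    intro t ht
    rw [mem_derivIter_limit hξ] at *
    exact fun ζ hζ => ih ζ hζ t (ht ζ hζ)

end ColoringSumsProof

namespace ColoringSumsProof

universe v

variable {S : Type u}

/-! ### Rank and maximal extensions -/

/-- The least stage at which `t` has been removed. -/
noncomputable def rnk (T : Set (List S)) (t : List S) : Ordinal.{v} :=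
  sInf {ξ | t ∉ derivIter T ξ}

theorem rnk_spec {T : Set (List S)} {μ : Ordinal.{v}} (hemp : derivIter T μ = ∅)
    (t : List S) : t ∉ derivIter T (rnk.{u, v} T t) := by
  have hne : {ξ | t ∉ derivIter T ξ}.Nonempty := ⟨μ, by simp [hemp]⟩
  rw [rnk]
  have h := csInf_mem hne
  rw [Set.mem_setOf_eq] at h
  exact h

theorem rnk_lt_spec {T : Set (List S)} {t : List S} {ζ : Ordinal.{v}}
    (h : ζ < rnk T t) : t ∈ derivIter T ζ := by
  by_contra hc
  exact absurd (csInf_le (OrderBot.bddBelow _) (by exact hc : ζ ∈ {ξ | t ∉ derivIter T ξ})) (not_le.2 h)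

theorem mem_derivIter_of_le_rnk {T : Set (List S)} (hT : IsBTree T) {μ : Ordinal.{v}}
    (hemp : derivIter T μ = ∅) {t u : List S} (ht : t ≠ []) (htu : ProperPrefix t u)
    (hu : u ∈ T) : ∀ ξ ≤ rnk.{u, v} T u, t ∈ derivIter T ξ := by
  intro ξ
  induction ξ using limInd with
  | H₁ =>
    intro _
    rw [derivIter_zero]
    exact hT.2 ht htu.1 hu
  | H₂ ξ ih =>
    intro h
    have hξ : ξ < rnk T u := lt_of_lt_of_le (Order.lt_succ ξ) h
    exact derivIter_step hT ht htu (rnk_lt_spec hξ)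
  | H₃ ξ hξ ih =>
    intro h
    rw [mem_derivIter_limit hξ]
    exact fun ζ hζ => ih ζ hζ (le_trans (le_of_lt hζ) h)

theorem rnk_lt_rnk {T : Set (List S)} (hT : IsBTree T) {μ : Ordinal.{v}}
    (hemp : derivIter T μ = ∅) {t u : List S} (ht : t ≠ []) (htu : ProperPrefix t u)
    (hu : u ∈ T) : rnk.{u, v} T u < rnk.{u, v} T t := by
  by_contra hc
  push_neg at hc
  exact absurd (mem_derivIter_of_le_rnk hT hemp ht htu hu (rnk T t) hc)
    (rnk_spec hemp t)

/-- Every element of a well-founded B-tree has a maximal extension. -/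
theorem maxExt {T : Set (List S)} (hT : IsBTree T) {μ : Ordinal.{v}}
    (hemp : derivIter T μ = ∅) : ∀ t ∈ T, ∃ w ∈ maxElems T, t <+: w := by
  have : ∀ ρ : Ordinal.{v}, ∀ t ∈ T, rnk T t = ρ → ∃ w ∈ maxElems T, t <+: w := by
    intro ρ
    induction ρ using Ordinal.induction with
    | h ρ ih =>
      intro t htT hρ
      by_cases hm : ∃ u ∈ T, ProperPrefix t u
      · obtain ⟨u, huT, hpp⟩ := hm
        have htne : t ≠ [] := fun he => hT.1 (he ▸ htT)
        have hlt : rnk T u < ρ := hρ ▸ rnk_lt_rnk hT hemp htne hpp huT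
        obtain ⟨w, hw, huw⟩ := ih _ hlt u huT rfl
        exact ⟨w, hw, hpp.1.trans huw⟩
      · exact ⟨t, ⟨htT, hm⟩, List.prefix_refl t⟩
  exact fun t ht => this (rnk T t) t ht rfl

/-! ### Cones -/

/-- The subtree of `T` above the root `a`. -/
def coneSub (T : Set (List S)) (a : S) : Set (List S) :=
  {s | s ≠ [] ∧ a :: s ∈ T}

theorem coneSub_isBTree {T : Set (List S)} (hT : IsBTree T) (a : S) :
    IsBTree (coneSub T a) := by
  refine ⟨fun h => h.1 rfl, ?_⟩
  rintro s t hs hst ⟨ht, htT⟩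
  exact ⟨hs, hT.2 (by simp) (List.cons_prefix_cons.2 ⟨rfl, hst⟩) htT⟩

theorem derivIter_proj {T : Set (List S)} {a : S} (ξ : Ordinal) :
    ∀ s : List S, s ≠ [] → (a :: s) ∈ derivIter T ξ → s ∈ derivIter (coneSub T a) ξ := by
  induction ξ using limInd with
  | H₁ => intro s hs h; rw [derivIter_zero] at *; exact ⟨hs, h⟩
  | H₂ ξ ih =>
    intro s hs h
    rw [derivIter_succ] at *
    obtain ⟨h1, u, hu, hpp⟩ := h
    obtain ⟨b, u', rfl⟩ : ∃ b u', u = b :: u' := by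
      cases u with
      | nil => exact absurd (List.prefix_nil.1 hpp.1) (by simp)
      | cons b u' => exact ⟨b, u', rfl⟩
    have hab : a = b ∧ s <+: u' := List.cons_prefix_cons.1 hpp.1
    obtain ⟨rfl, hsu⟩ := hab
    have hu'ne : u' ≠ [] := by
      rintro rfl
      rcases List.prefix_nil.1 hsu with rfl
      exact hpp.2 rfl
    refine ⟨ih s hs h1, u', ih u' hu'ne hu, ⟨hsu, fun he => hpp.2 (by rw [he])⟩⟩
  | H₃ ξ hξ ih =>
    intro s hs h
    rw [mem_derivIter_limit hξ] at *
    exact fun ζ hζ => ih ζ hζ s hs (h ζ hζ)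

theorem derivIter_lift {T : Set (List S)} {a : S} (ξ : Ordinal) :
    ∀ s ∈ derivIter (coneSub T a) ξ, (a :: s) ∈ derivIter T ξ := by
  induction ξ using limInd with
  | H₁ => intro s h; rw [derivIter_zero] at *; exact h.2
  | H₂ ξ ih =>
    intro s h
    rw [derivIter_succ] at *
    obtain ⟨h1, u, hu, hpp⟩ := h
    exact ⟨ih s h1, a :: u, ih u hu, pp_cons.2 hpp⟩
  | H₃ ξ hξ ih =>
    intro s h
    rw [mem_derivIter_limit hξ] at *
    exact fun ζ hζ => ih ζ hζ s (h ζ hζ)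

/-- If all stages below `τ` of the cone above `a` are nonempty, then `[a]` survives
to stage `τ`. -/
theorem ladder {T : Set (List S)} {a : S} (haT : [a] ∈ T) (τ : Ordinal)
    (h : ∀ κ < τ, (derivIter (coneSub T a) κ).Nonempty) :
    [a] ∈ derivIter T τ := by
  induction τ using limInd with
  | H₁ => rw [derivIter_zero]; exact haT
  | H₂ τ ih =>
    obtain ⟨s, hs⟩ := h τ (Order.lt_succ τ)
    have hsne : s ≠ [] := (derivIter_subset _ _ hs).1
    rw [derivIter_succ]
    refine ⟨ih (fun κ hκ => h κ (hκ.trans (Order.lt_succ τ))), a :: s,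
      derivIter_lift τ s hs,
      ⟨⟨s, rfl⟩, fun he => hsne (by injection he with _ h2; exact h2.symm)⟩⟩
  | H₃ τ hτ ih =>
    rw [mem_derivIter_limit hτ]
    exact fun ζ hζ => ih ζ hζ (fun κ hκ => h κ (hκ.trans hζ))

end ColoringSumsProof

namespace ColoringSumsProof

/-! ### Structure of minimal trees -/

theorem minTree_zero : minTree 0 = ∅ := Ordinal.limitRecOn_zero _ _ _

theorem minTree_succ (ζ : Ordinal) :
    minTree (Order.succ ζ) =
      {l : List Ordinal | l = [Order.succ ζ] ∨ ∃ t ∈ minTree ζ, l = Order.succ ζ :: t} :=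
  Ordinal.limitRecOn_succ _ _ _ _

theorem minTree_limit {ξ : Ordinal} (h : Order.IsSuccLimit ξ) :
    minTree ξ = ⋃ (ζ : Set.Iio ξ), minTree (Order.succ ζ.1) :=
  Ordinal.limitRecOn_limit _ _ _ _ h

theorem mem_minTree_limit {ξ : Ordinal} (h : Order.IsSuccLimit ξ) {l : List Ordinal} :
    l ∈ minTree ξ ↔ ∃ ζ < ξ, l ∈ minTree (Order.succ ζ) := by
  rw [minTree_limit h, Set.mem_iUnion]
  exact ⟨fun ⟨ζ, hζ⟩ => ⟨ζ.1, ζ.2, hζ⟩, fun ⟨ζ, h1, h2⟩ => ⟨⟨ζ, h1⟩, h2⟩⟩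

theorem minTree_ne_nil : ∀ ξ : Ordinal, ∀ l ∈ minTree ξ, l ≠ [] := by
  intro ξ
  induction ξ using limInd with
  | H₁ => rw [minTree_zero]; rintro l ⟨⟩
  | H₂ ξ ih =>
    rw [minTree_succ]
    rintro l (rfl | ⟨t, ht, rfl⟩) <;> simp
  | H₃ ξ hξ ih =>
    intro l hl
    rw [mem_minTree_limit hξ] at hl
    obtain ⟨ζ, hζ, hl⟩ := hl
    exact ih (Order.succ ζ) (hξ.succ_lt hζ) l hl

theorem minTree_head {ζ : Ordinal} {l : List Ordinal} (h : l ∈ minTree (Order.succ ζ)) :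
    ∃ l', l = Order.succ ζ :: l' := by
  rw [minTree_succ] at h
  rcases h with rfl | ⟨t, ht, rfl⟩
  exacts [⟨[], rfl⟩, ⟨t, rfl⟩]

theorem minTree_comp_unique {ζ₁ ζ₂ : Ordinal} {l : List Ordinal}
    (h1 : l ∈ minTree (Order.succ ζ₁)) (h2 : l ∈ minTree (Order.succ ζ₂)) : ζ₁ = ζ₂ := by
  obtain ⟨l', rfl⟩ := minTree_head h1
  obtain ⟨l'', he⟩ := minTree_head h2
  have h3 : Order.succ ζ₁ = Order.succ ζ₂ := by injection he
  exact Order.succ_eq_succ_iff.1 h3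

theorem minTree_isBTree : ∀ ξ : Ordinal, IsBTree (minTree ξ) := by
  intro ξ
  induction ξ using limInd with
  | H₁ => exact ⟨by rw [minTree_zero]; exact id, by rw [minTree_zero]; rintro s t _ _ ⟨⟩⟩
  | H₂ ξ ih =>
    constructor
    · intro h
      exact minTree_ne_nil _ _ h rfl
    · intro s t hs hst ht
      rw [minTree_succ] at ht ⊢
      rcases ht with rfl | ⟨t', ht', rfl⟩
      · rcases prefix_single hst with rfl | rfl
        · exact absurd rfl hs
        · exact Or.inl rfl
      · cases s with
        | nil => exact absurd rfl hs
        | cons b s' =>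
          obtain ⟨rfl, hs'⟩ := List.cons_prefix_cons.1 hst
          cases s' with
          | nil => exact Or.inl rfl
          | cons c s'' =>
            exact Or.inr ⟨c :: s'', ih.2 (by simp) hs' ht', rfl⟩
  | H₃ ξ hξ ih =>
    constructor
    · intro h
      exact minTree_ne_nil _ _ h rfl
    · intro s t hs hst ht
      rw [mem_minTree_limit hξ] at ht ⊢
      obtain ⟨ζ, hζ, ht⟩ := ht
      exact ⟨ζ, hζ, (ih (Order.succ ζ) (hξ.succ_lt hζ)).2 hs hst ht⟩

theorem minTree_root_mem (ζ : Ordinal) : [Order.succ ζ] ∈ minTree (Order.succ ζ) := by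
  rw [minTree_succ]; exact Or.inl rfl

theorem minTree_cons_mem {ζ : Ordinal} {t : List Ordinal} (h : t ∈ minTree ζ) :
    Order.succ ζ :: t ∈ minTree (Order.succ ζ) := by
  rw [minTree_succ]; exact Or.inr ⟨t, h, rfl⟩

theorem minTree_nonempty {ξ : Ordinal} (h : 0 < ξ) : (minTree ξ).Nonempty := by
  rcases Ordinal.zero_or_succ_or_isSuccLimit ξ with rfl | ⟨ζ, rfl⟩ | hl
  · exact absurd h (lt_irrefl 0)
  · exact ⟨_, minTree_root_mem ζ⟩
  · refine ⟨[Order.succ 0], ?_⟩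
    rw [mem_minTree_limit hl]
    exact ⟨0, h, minTree_root_mem 0⟩

theorem maxElems_subset {α : Type*} (T : Set (List α)) : maxElems T ⊆ T := fun _ h => h.1

theorem maxElems_cons {ζ : Ordinal} {t : List Ordinal} (h : t ∈ maxElems (minTree ζ)) :
    Order.succ ζ :: t ∈ maxElems (minTree (Order.succ ζ)) := by
  refine ⟨minTree_cons_mem h.1, ?_⟩
  rintro ⟨u, hu, hpp⟩
  rw [minTree_succ] at hu
  rcases hu with rfl | ⟨u', hu', rfl⟩
  · have := pp_length hpp
    simp at this
  · exact h.2 ⟨u', hu', pp_cons.1 hpp⟩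

theorem maxElems_succ_rev {ζ : Ordinal} (hζ : 0 < ζ) {l : List Ordinal}
    (h : l ∈ maxElems (minTree (Order.succ ζ))) :
    ∃ t ∈ maxElems (minTree ζ), l = Order.succ ζ :: t := by
  have h1 := h.1
  rw [minTree_succ] at h1
  rcases h1 with rfl | ⟨t, ht, rfl⟩
  · exfalso
    obtain ⟨x, hx⟩ := minTree_nonempty hζ
    refine h.2 ⟨Order.succ ζ :: x, minTree_cons_mem hx, ⟨⟨x, rfl⟩, ?_⟩⟩
    intro he
    exact minTree_ne_nil _ _ hx (by injection he with _ h2; exact h2.symm)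
  · refine ⟨t, ⟨ht, ?_⟩, rfl⟩
    rintro ⟨u, hu, hpp⟩
    exact h.2 ⟨Order.succ ζ :: u, minTree_cons_mem hu, pp_cons.2 hpp⟩

theorem maxElems_one {l : List Ordinal} :
    l ∈ maxElems (minTree (Order.succ 0)) ↔ l = [Order.succ 0] := by
  constructor
  · intro h
    have h1 := h.1
    rw [minTree_succ] at h1
    rcases h1 with rfl | ⟨t, ht, rfl⟩
    · rfl
    · rw [minTree_zero] at ht; exact absurd ht (Set.notMem_empty t)
  · rintro rfl
    refine ⟨minTree_root_mem 0, ?_⟩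
    rintro ⟨u, hu, hpp⟩
    rw [minTree_succ] at hu
    rcases hu with rfl | ⟨t, ht, rfl⟩
    · exact hpp.2 rfl
    · rw [minTree_zero] at ht; exact absurd ht (Set.notMem_empty t)

theorem mem_comp_of_limit {ξ ζ : Ordinal} (hξ : Order.IsSuccLimit ξ) {l u : List Ordinal}
    (hl : l ∈ minTree (Order.succ ζ)) (hu : u ∈ minTree ξ) (hlu : l <+: u) :
    u ∈ minTree (Order.succ ζ) := by
  rw [mem_minTree_limit hξ] at hu
  obtain ⟨δ, hδ, hu⟩ := hu
  obtain ⟨l', rfl⟩ := minTree_head hl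
  obtain ⟨u', rfl⟩ := minTree_head hu
  obtain ⟨he, -⟩ := List.cons_prefix_cons.1 hlu
  rw [Order.succ_eq_succ_iff] at he
  subst he
  exact hu

theorem maxElems_limit {ξ : Ordinal} (hξ : Order.IsSuccLimit ξ) {l : List Ordinal} :
    l ∈ maxElems (minTree ξ) ↔ ∃ ζ < ξ, l ∈ maxElems (minTree (Order.succ ζ)) := by
  constructor
  · intro h
    have h1 := h.1
    rw [mem_minTree_limit hξ] at h1
    obtain ⟨ζ, hζ, h1⟩ := h1
    refine ⟨ζ, hζ, h1, ?_⟩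
    rintro ⟨u, hu, hpp⟩
    refine h.2 ⟨u, ?_, hpp⟩
    rw [mem_minTree_limit hξ]
    exact ⟨ζ, hζ, hu⟩
  · rintro ⟨ζ, hζ, h⟩
    constructor
    · rw [mem_minTree_limit hξ]
      exact ⟨ζ, hζ, h.1⟩
    · rintro ⟨u, hu, hpp⟩
      exact h.2 ⟨u, mem_comp_of_limit hξ h.1 hu hpp.1, hpp⟩

/-- The cone of `minTree (succ ζ)` above its root is `minTree ζ`. -/
theorem coneSub_minTree (ζ : Ordinal) :
    coneSub (minTree (Order.succ ζ)) (Order.succ ζ) = minTree ζ := by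
  ext s
  constructor
  · rintro ⟨hs, hmem⟩
    rw [minTree_succ] at hmem
    rcases hmem with he | ⟨t, ht, he⟩
    · exact absurd (by injection he) hs
    · have : s = t := by injection he
      exact this ▸ ht
  · intro hs
    exact ⟨minTree_ne_nil _ _ hs, minTree_cons_mem hs⟩

end ColoringSumsProof

namespace ColoringSumsProof

/-! ### Embeddings of minimal trees -/

theorem minTree_embed : ∀ ξ : Ordinal, ∀ ξ' ≤ ξ, ∃ f : List Ordinal → List Ordinal,
    (∀ t ∈ minTree ξ', f t ∈ minTree ξ) ∧
    (∀ s ∈ minTree ξ', ∀ t ∈ minTree ξ', ProperPrefix s t → ProperPrefix (f s) (f t)) ∧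
    (∀ t ∈ maxElems (minTree ξ'), f t ∈ maxElems (minTree ξ)) := by
  intro ξ
  induction ξ using Ordinal.induction with
  | h ξ ih =>
    intro ξ' hle
    rcases eq_or_lt_of_le hle with rfl | hlt
    · exact ⟨id, fun t ht => ht, fun s hs t ht h => h, fun t ht => ht⟩
    · rcases Ordinal.zero_or_succ_or_isSuccLimit ξ with rfl | ⟨η, rfl⟩ | hl
      · exact absurd hlt (Ordinal.not_lt_zero ξ')
      · obtain ⟨f, hf1, hf2, hf3⟩ := ih η (Order.lt_succ η) ξ' (Order.lt_succ_iff.1 hlt)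
        refine ⟨fun t => Order.succ η :: f t, ?_, ?_, ?_⟩
        · exact fun t ht => minTree_cons_mem (hf1 t ht)
        · exact fun s hs t ht h => pp_cons.2 (hf2 s hs t ht h)
        · exact fun t ht => maxElems_cons (hf3 t ht)
      · obtain ⟨f, hf1, hf2, hf3⟩ := ih (Order.succ ξ') (hl.succ_lt hlt) ξ' (Order.le_succ ξ')
        refine ⟨f, ?_, hf2, ?_⟩
        · exact fun t ht => (mem_minTree_limit hl).2 ⟨ξ', hlt, hf1 t ht⟩
        · exact fun t ht => (maxElems_limit hl).2 ⟨ξ', hlt, hf3 t ht⟩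

/-! ### The order of the minimal tree -/

theorem coneSub_minTree_limit {ξ ζ : Ordinal} (hξ : Order.IsSuccLimit ξ) (hζ : ζ < ξ) :
    coneSub (minTree ξ) (Order.succ ζ) = minTree ζ := by
  ext s
  constructor
  · rintro ⟨hs, hmem⟩
    rw [mem_minTree_limit hξ] at hmem
    obtain ⟨δ, hδ, hmem⟩ := hmem
    obtain ⟨l', hl'⟩ := minTree_head hmem
    have hde : Order.succ ζ = Order.succ δ := by injection hl'
    rw [Order.succ_eq_succ_iff] at hde
    subst hde
    rw [← coneSub_minTree ζ]
    exact ⟨hs, hmem⟩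
  · intro hs
    exact ⟨minTree_ne_nil _ _ hs, (mem_minTree_limit hξ).2 ⟨ζ, hζ, minTree_cons_mem hs⟩⟩

theorem minTree_rank_lower : ∀ ξ : Ordinal, ∀ ζ < ξ, (derivIter (minTree ξ) ζ).Nonempty := by
  intro ξ
  induction ξ using Ordinal.induction with
  | h ξ ih =>
    intro ζ hζ
    rcases Ordinal.zero_or_succ_or_isSuccLimit ξ with rfl | ⟨η, rfl⟩ | hl
    · exact absurd hζ (Ordinal.not_lt_zero ζ)
    · have hζη : ζ ≤ η := Order.lt_succ_iff.1 hζ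
      refine ⟨[Order.succ η], ladder (minTree_root_mem η) ζ ?_⟩
      rw [coneSub_minTree]
      exact fun κ hκ => ih η (Order.lt_succ η) κ (lt_of_lt_of_le hκ hζη)
    · refine ⟨[Order.succ ζ], ladder ?_ ζ ?_⟩
      · exact (mem_minTree_limit hl).2 ⟨ζ, hζ, minTree_root_mem ζ⟩
      · rw [coneSub_minTree_limit hl hζ]
        exact fun κ hκ => ih ζ hζ κ hκ

theorem minTree_rank_upper : ∀ ξ : Ordinal, derivIter (minTree ξ) ξ = ∅ := by
  intro ξ
  induction ξ using Ordinal.induction with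
  | h ξ ih =>
    rcases Ordinal.zero_or_succ_or_isSuccLimit ξ with rfl | ⟨η, rfl⟩ | hl
    · rw [derivIter_zero, minTree_zero]
    · have hsub : derivIter (minTree (Order.succ η)) η ⊆ {[Order.succ η]} := by
        intro x hx
        have hxm := derivIter_subset _ _ hx
        rw [minTree_succ] at hxm
        rcases hxm with rfl | ⟨s, hs, rfl⟩
        · rfl
        · exfalso
          have hproj := derivIter_proj η s (minTree_ne_nil _ _ hs) hx
          rw [coneSub_minTree] at hproj
          rw [ih η (Order.lt_succ η)] at hproj
          exact hproj
      ext x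
      simp only [Set.mem_empty_iff_false, iff_false]
      intro hx
      rw [derivIter_succ] at hx
      obtain ⟨hx1, u, hu, hpp⟩ := hx
      have hx2 := hsub hx1
      have hu2 := hsub hu
      rw [Set.mem_singleton_iff] at hx2 hu2
      exact hpp.2 (hx2.trans hu2.symm)
    · ext x
      simp only [Set.mem_empty_iff_false, iff_false]
      intro hx
      have hxm := derivIter_subset _ _ hx
      rw [mem_minTree_limit hl] at hxm
      obtain ⟨δ, hδ, hxm⟩ := hxm
      obtain ⟨l', rfl⟩ := minTree_head hxm
      cases l' with
      | cons c s =>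
        have hx3 : (Order.succ δ :: c :: s) ∈ derivIter (minTree ξ) δ :=
          derivIter_antitone _ (le_of_lt hδ) hx
        have hproj := derivIter_proj δ (c :: s) (by simp) hx3
        rw [coneSub_minTree_limit hl hδ, ih δ hδ] at hproj
        exact hproj
      | nil =>
        have hx3 : [Order.succ δ] ∈ derivIter (minTree ξ) (Order.succ δ) :=
          derivIter_antitone _ (le_of_lt (hl.succ_lt hδ)) hx
        rw [derivIter_succ] at hx3
        obtain ⟨hx1, u, hu, hpp⟩ := hx3
        obtain ⟨b, u', rfl⟩ : ∃ b u', u = b :: u' := by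
          cases u with
          | nil => exact absurd (List.prefix_nil.1 hpp.1) (by simp)
          | cons b u' => exact ⟨b, u', rfl⟩
        obtain ⟨rfl, hpre⟩ := List.cons_prefix_cons.1 hpp.1
        have hu'ne : u' ≠ [] := by
          rintro rfl
          exact hpp.2 rfl
        have hproj := derivIter_proj δ u' hu'ne hu
        rw [coneSub_minTree_limit hl hδ, ih δ hδ] at hproj
        exact hproj

theorem hasOrder_minTree (ξ : Ordinal) : hasOrder (minTree ξ) ξ :=
  ⟨minTree_rank_upper ξ, fun ζ hζ => Set.nonempty_iff_ne_empty.1 (minTree_rank_lower ξ ζ hζ)⟩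

/-! ### The union dichotomy for minimal trees -/

theorem union_dichotomy : ∀ ξ : Ordinal, ∀ A B : Set (List Ordinal),
    IsBTree A → IsBTree B → A ∪ B = minTree ξ →
    (∀ σ < ξ, (derivIter A σ).Nonempty) ∨ (∀ σ < ξ, (derivIter B σ).Nonempty) := by
  intro ξ
  induction ξ using Ordinal.induction with
  | h ξ ih =>
    intro A B hA hB hAB
    rcases Ordinal.zero_or_succ_or_isSuccLimit ξ with rfl | ⟨η, rfl⟩ | hl
    · exact Or.inl (fun σ hσ => absurd hσ (Ordinal.not_lt_zero σ))
    · rcases eq_or_lt_of_le (Ordinal.zero_le η) with rfl | hη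
      · -- ξ = 1
        have hroot : [Order.succ 0] ∈ A ∪ B := by rw [hAB]; exact minTree_root_mem 0
        rcases hroot with h | h
        · refine Or.inl fun σ hσ => ?_
          have : σ = 0 := by
            rcases Order.lt_succ_iff.1 hσ with h'
            exact le_antisymm h' (Ordinal.zero_le σ)
          subst this
          rw [derivIter_zero]
          exact ⟨_, h⟩
        · refine Or.inr fun σ hσ => ?_
          have : σ = 0 := by
            rcases Order.lt_succ_iff.1 hσ with h'
            exact le_antisymm h' (Ordinal.zero_le σ)
          subst this
          rw [derivIter_zero]
          exact ⟨_, h⟩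
      · -- ξ = succ η, η > 0
        have hsplit : coneSub A (Order.succ η) ∪ coneSub B (Order.succ η) = minTree η := by
          ext t
          constructor
          · rintro (⟨ht, hmem⟩ | ⟨ht, hmem⟩) <;>
            · rw [← coneSub_minTree η]
              first
              | exact ⟨ht, by rw [← hAB]; exact Or.inl hmem⟩
              | exact ⟨ht, by rw [← hAB]; exact Or.inr hmem⟩
          · intro ht
            have : Order.succ η :: t ∈ A ∪ B := by
              rw [hAB]; exact minTree_cons_mem ht
            rcases this with h | h
            · exact Or.inl ⟨minTree_ne_nil _ _ ht, h⟩
            · exact Or.inr ⟨minTree_ne_nil _ _ ht, h⟩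
        rcases ih η (Order.lt_succ η) _ _ (coneSub_isBTree hA _) (coneSub_isBTree hB _)
          hsplit with hgood | hgood
        · refine Or.inl fun σ hσ => ?_
          obtain ⟨t, ht⟩ := hgood 0 hη
          rw [derivIter_zero] at ht
          have hrootA : [Order.succ η] ∈ A := hA.2 (by simp) ⟨t, rfl⟩ ht.2
          exact ⟨[Order.succ η], ladder hrootA σ
            (fun κ hκ => hgood κ (lt_of_lt_of_le hκ (Order.lt_succ_iff.1 hσ)))⟩
        · refine Or.inr fun σ hσ => ?_
          obtain ⟨t, ht⟩ := hgood 0 hη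
          rw [derivIter_zero] at ht
          have hrootB : [Order.succ η] ∈ B := hB.2 (by simp) ⟨t, rfl⟩ ht.2
          exact ⟨[Order.succ η], ladder hrootB σ
            (fun κ hκ => hgood κ (lt_of_lt_of_le hκ (Order.lt_succ_iff.1 hσ)))⟩
    · -- ξ limit
      have hcomp : ∀ δ < ξ, (A ∩ minTree (Order.succ δ)) ∪ (B ∩ minTree (Order.succ δ))
          = minTree (Order.succ δ) := by
        intro δ hδ
        ext x
        constructor
        · rintro (⟨_, h⟩ | ⟨_, h⟩) <;> exact h
        · intro hx
          have : x ∈ A ∪ B := by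
            rw [hAB]
            exact (mem_minTree_limit hl).2 ⟨δ, hδ, hx⟩
          rcases this with h | h
          · exact Or.inl ⟨h, hx⟩
          · exact Or.inr ⟨h, hx⟩
      have hint : ∀ (C : Set (List Ordinal)), IsBTree C → ∀ δ : Ordinal,
          IsBTree (C ∩ minTree (Order.succ δ)) := by
        intro C hC δ
        refine ⟨fun h => hC.1 h.1, ?_⟩
        rintro s t hs hst ⟨ht1, ht2⟩
        exact ⟨hC.2 hs hst ht1, (minTree_isBTree _).2 hs hst ht2⟩
      by_cases hcof : ∀ σ₀ < ξ, ∃ δ, σ₀ ≤ δ ∧ δ < ξ ∧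
          (∀ σ < Order.succ δ, (derivIter (A ∩ minTree (Order.succ δ)) σ).Nonempty)
      · refine Or.inl fun σ hσ => ?_
        obtain ⟨δ, hσδ, hδξ, hgood⟩ := hcof σ hσ
        obtain ⟨t, ht⟩ := hgood σ (lt_of_le_of_lt hσδ (Order.lt_succ δ))
        exact ⟨t, derivIter_mono Set.inter_subset_left σ ht⟩
      · push_neg at hcof
        obtain ⟨σ₀, hσ₀ξ, hbad⟩ := hcof
        refine Or.inr fun σ hσ => ?_
        set δ := max σ σ₀ with hδ
        have hδξ : δ < ξ := max_lt hσ hσ₀ξ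
        have hgoodB : ∀ σ' < Order.succ δ, (derivIter (B ∩ minTree (Order.succ δ)) σ').Nonempty := by
          rcases ih (Order.succ δ) (hl.succ_lt hδξ) _ _ (hint A hA δ) (hint B hB δ)
            (hcomp δ hδξ) with h | h
          · obtain ⟨σ', hσ', hemp'⟩ := hbad δ (le_max_right σ σ₀) hδξ
            exact absurd (h σ' hσ') (by rw [hemp']; exact Set.not_nonempty_empty)
          · exact h
        obtain ⟨t, ht⟩ := hgoodB σ (lt_of_le_of_lt (le_max_left σ σ₀) (Order.lt_succ δ))
        exact ⟨t, derivIter_mono Set.inter_subset_left σ ht⟩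

end ColoringSumsProof

namespace ColoringSumsProof

/-! ### Monochromatic extended order preserving maps -/

/-- There is an extended order preserving map of `𝒯_ξ` into `T` which is
`j`-monochromatic for the coloring `C`. -/
def GMap (T : Set (List S)) (C : List S → Fin 2 → Set (List S)) (j : Fin 2)
    (ξ : Ordinal.{v}) : Prop :=
  ∃ i e : List Ordinal.{v} → List S,
    (∀ t ∈ minTree ξ, i t ∈ T) ∧
    (∀ s ∈ minTree ξ, ∀ t ∈ minTree ξ, ProperPrefix s t → ProperPrefix (i s) (i t)) ∧
    ∀ t ∈ maxElems (minTree ξ),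
      e t ∈ maxElems T ∧ i t <+: e t ∧ ∀ s ∈ minTree ξ, s <+: t → e t ∈ C (i s) j

theorem GMap_zero (T : Set (List S)) (C : List S → Fin 2 → Set (List S)) (j : Fin 2) :
    GMap T C j 0 := by
  refine ⟨fun _ => [], fun _ => [], ?_, ?_, ?_⟩ <;>
  · intro t ht
    rw [minTree_zero] at *
    first
    | exact absurd ht (Set.notMem_empty t)
    | exact absurd (maxElems_subset _ ht) (Set.notMem_empty t)

theorem GMap_shrink {T : Set (List S)} {C : List S → Fin 2 → Set (List S)} {j : Fin 2}
    {ξ ξ' : Ordinal.{v}} (hle : ξ' ≤ ξ) (h : GMap T C j ξ) : GMap T C j ξ' := by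
  obtain ⟨i, e, h1, h2, h3⟩ := h
  obtain ⟨f, hf1, hf2, hf3⟩ := minTree_embed ξ ξ' hle
  refine ⟨i ∘ f, e ∘ f, ?_, ?_, ?_⟩
  · exact fun t ht => h1 _ (hf1 t ht)
  · exact fun s hs t ht hst => h2 _ (hf1 s hs) _ (hf1 t ht) (hf2 s hs t ht hst)
  · intro t ht
    have htm := maxElems_subset _ ht
    obtain ⟨he1, he2, he3⟩ := h3 (f t) (hf3 t ht)
    refine ⟨he1, he2, ?_⟩
    intro s hs hst
    rcases eq_or_ne s t with rfl | hne
    · exact he3 (f s) (hf1 s hs) (List.prefix_refl _)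
    · exact he3 (f s) (hf1 s hs) (hf2 s hs t htm ⟨hst, hne⟩).1

theorem GMap_mono {U T : Set (List S)} {C : List S → Fin 2 → Set (List S)} {j : Fin 2}
    {ξ : Ordinal.{v}} (hU : U ⊆ T) (hmax : maxElems U ⊆ maxElems T)
    (h : GMap U C j ξ) : GMap T C j ξ := by
  obtain ⟨i, e, h1, h2, h3⟩ := h
  exact ⟨i, e, fun t ht => hU (h1 t ht), h2, fun t ht =>
    ⟨hmax (h3 t ht).1, (h3 t ht).2.1, (h3 t ht).2.2⟩⟩

theorem GMap_merge {T : Set (List S)} {C : List S → Fin 2 → Set (List S)} {j : Fin 2}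
    {ξ : Ordinal.{v}} (hl : Order.IsSuccLimit ξ)
    (h : ∀ ζ < ξ, GMap T C j (Order.succ ζ)) : GMap T C j ξ := by
  classical
  choose i e h1 h2 h3 using h
  set F : List Ordinal.{v} → List S := fun l =>
    if hc : ∃ ζ, ∃ _ : ζ < ξ, l ∈ minTree (Order.succ ζ) then
      i hc.choose hc.choose_spec.choose l else [] with hF
  set E : List Ordinal.{v} → List S := fun l =>
    if hc : ∃ ζ, ∃ _ : ζ < ξ, l ∈ minTree (Order.succ ζ) then
      e hc.choose hc.choose_spec.choose l else [] with hE
  have Fval : ∀ (ζ : Ordinal.{v}) (hζ : ζ < ξ) (l : List Ordinal.{v}),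
      l ∈ minTree (Order.succ ζ) → F l = i ζ hζ l := by
    intro ζ hζ l hl'
    have hc : ∃ ζ', ∃ _ : ζ' < ξ, l ∈ minTree (Order.succ ζ') := ⟨ζ, hζ, hl'⟩
    rw [hF]
    simp only [dif_pos hc]
    obtain rfl : hc.choose = ζ := minTree_comp_unique hc.choose_spec.choose_spec hl'
    rfl
  have Eval : ∀ (ζ : Ordinal.{v}) (hζ : ζ < ξ) (l : List Ordinal.{v}),
      l ∈ minTree (Order.succ ζ) → E l = e ζ hζ l := by
    intro ζ hζ l hl'
    have hc : ∃ ζ', ∃ _ : ζ' < ξ, l ∈ minTree (Order.succ ζ') := ⟨ζ, hζ, hl'⟩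
    rw [hE]
    simp only [dif_pos hc]
    obtain rfl : hc.choose = ζ := minTree_comp_unique hc.choose_spec.choose_spec hl'
    rfl
  refine ⟨F, E, ?_, ?_, ?_⟩
  · intro t ht
    obtain ⟨ζ, hζ, hmem⟩ := (mem_minTree_limit hl).1 ht
    rw [Fval ζ hζ t hmem]
    exact h1 ζ hζ t hmem
  · intro s hs t ht hst
    obtain ⟨ζ, hζ, hmem⟩ := (mem_minTree_limit hl).1 ht
    have hsmem : s ∈ minTree (Order.succ ζ) :=
      (minTree_isBTree _).2 (minTree_ne_nil _ _ hs) hst.1 hmem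
    rw [Fval ζ hζ t hmem, Fval ζ hζ s hsmem]
    exact h2 ζ hζ s hsmem t hmem hst
  · intro t ht
    obtain ⟨ζ, hζ, hmem⟩ := (maxElems_limit hl).1 ht
    have htmem := maxElems_subset _ hmem
    obtain ⟨he1, he2, he3⟩ := h3 ζ hζ t hmem
    rw [Fval ζ hζ t htmem, Eval ζ hζ t htmem]
    refine ⟨he1, he2, ?_⟩
    intro s hs hst
    have hsmem : s ∈ minTree (Order.succ ζ) :=
      (minTree_isBTree _).2 (minTree_ne_nil _ _ hs) hst htmem
    rw [Fval ζ hζ s hsmem]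
    exact he3 s hsmem hst

theorem GMap_single {T : Set (List S)} {C : List S → Fin 2 → Set (List S)} {j : Fin 2}
    {t w : List S} (htT : t ∈ T) (hw : w ∈ maxElems T) (htw : t <+: w)
    (hwc : w ∈ C t j) : GMap T C j (Order.succ 0) := by
  refine ⟨fun _ => t, fun _ => w, fun _ _ => htT, ?_, ?_⟩
  · intro s hs l hl hsl
    exfalso
    rw [minTree_succ] at hs hl
    rw [minTree_zero] at hs hl
    simp only [Set.mem_setOf_eq, Set.mem_empty_iff_false, false_and, exists_false, or_false] at hs hl
    exact hsl.2 (hs.trans hl.symm)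
  · intro l hlm
    rw [maxElems_one] at hlm
    refine ⟨hw, htw, ?_⟩
    intro s hs hsl
    rw [minTree_succ, minTree_zero] at hs
    simp only [Set.mem_setOf_eq, Set.mem_empty_iff_false, false_and, exists_false, or_false] at hs
    exact hwc

theorem cons_ne_single {α : Type*} {a : α} {t : List α} (ht : t ≠ []) : a :: t ≠ [a] :=
  fun h => ht (List.cons_eq_cons.1 h).2

theorem GMap_bump {T : Set (List S)} {C : List S → Fin 2 → Set (List S)} {j : Fin 2}
    {α : Ordinal.{v}} (hα : 0 < α) {r : List S} (hr : r ∈ T)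
    (i e : List Ordinal.{v} → List S)
    (h1 : ∀ t ∈ minTree α, i t ∈ T)
    (h2 : ∀ s ∈ minTree α, ∀ t ∈ minTree α, ProperPrefix s t → ProperPrefix (i s) (i t))
    (h3 : ∀ t ∈ maxElems (minTree α), e t ∈ maxElems T ∧ i t <+: e t ∧ e t ∈ C r j ∧
      ∀ s ∈ minTree α, s <+: t → e t ∈ C (i s) j)
    (h4 : ∀ t ∈ minTree α, ProperPrefix r (i t)) :
    GMap T C j (Order.succ α) := by
  classical
  refine ⟨fun l => if l = [Order.succ α] then r else i l.tail,
    fun l => e l.tail, ?_, ?_, ?_⟩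
  · intro l hlm
    dsimp only
    rw [minTree_succ] at hlm
    rcases hlm with rfl | ⟨t, ht, rfl⟩
    · rw [if_pos rfl]; exact hr
    · rw [if_neg (cons_ne_single (minTree_ne_nil _ _ ht))]
      exact h1 t ht
  · intro s hs l hlm hsl
    dsimp only
    rw [minTree_succ] at hs hlm
    rcases hlm with rfl | ⟨t, ht, rfl⟩
    · exfalso
      rcases hs with rfl | ⟨s', hs', rfl⟩
      · exact hsl.2 rfl
      · have := pp_length hsl
        simp at this
    · rw [if_neg (cons_ne_single (minTree_ne_nil _ _ ht))]
      rcases hs with rfl | ⟨s', hs', rfl⟩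
      · rw [if_pos rfl]
        exact h4 t ht
      · rw [if_neg (cons_ne_single (minTree_ne_nil _ _ hs'))]
        exact h2 s' hs' t ht (pp_cons.1 hsl)
  · intro l hlm
    dsimp only
    obtain ⟨m, hm, rfl⟩ := maxElems_succ_rev hα hlm
    obtain ⟨he1, he2, he3, he4⟩ := h3 m hm
    rw [if_neg (cons_ne_single (minTree_ne_nil _ _ (maxElems_subset _ hm)))]
    refine ⟨he1, he2, ?_⟩
    intro s hs hsl
    rw [minTree_succ] at hs
    rcases hs with rfl | ⟨s', hs', rfl⟩
    · rw [if_pos rfl]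
      exact he3
    · rw [if_neg (cons_ne_single (minTree_ne_nil _ _ hs'))]
      exact he4 s' hs' (List.cons_prefix_cons.1 hsl).2

end ColoringSumsProof

namespace ColoringSumsProof

/-! ### Orders of cones -/

noncomputable def coneOrd (T : Set (List S)) (a : S) : Ordinal.{v} :=
  sInf {ξ | derivIter (coneSub T a) ξ = ∅}

@[simp] theorem coneOrd_def (T : Set (List S)) (a : S) :
    coneOrd T a = sInf {ξ : Ordinal.{v} | derivIter (coneSub T a) ξ = ∅} := rfl

theorem coneSub_stage_empty {T : Set (List S)} {μ : Ordinal.{v}} (hμ : hasOrder T μ)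
    (a : S) : derivIter (coneSub T a) μ = ∅ := by
  ext s
  simp only [Set.mem_empty_iff_false, iff_false]
  intro hs
  have := derivIter_lift μ s hs
  rw [hμ.1] at this
  exact this

theorem hasOrder_coneSub {T : Set (List S)} {μ : Ordinal.{v}} (hμ : hasOrder T μ)
    (a : S) : hasOrder (coneSub T a) (coneOrd T a : Ordinal.{v}) := by
  have hne : {ξ : Ordinal.{v} | derivIter (coneSub T a) ξ = ∅}.Nonempty :=
    ⟨μ, coneSub_stage_empty hμ a⟩
  constructor
  · have h := csInf_mem hne
    rw [Set.mem_setOf_eq] at h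
    exact h
  · intro ζ hζ hemp
    have hmem : ζ ∈ {ξ : Ordinal.{v} | derivIter (coneSub T a) ξ = ∅} := hemp
    exact absurd (csInf_le (OrderBot.bddBelow _) hmem) (not_le.2 hζ)

theorem coneOrd_lt {T : Set (List S)} {μ : Ordinal.{v}} (hμ : hasOrder T μ)
    {a : S} (ha : [a] ∈ T) : (coneOrd T a : Ordinal.{v}) < μ := by
  have h1 : [a] ∈ derivIter T (coneOrd T a) :=
    ladder ha _ (fun κ hκ => Set.nonempty_iff_ne_empty.2 ((hasOrder_coneSub hμ a).2 κ hκ))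
  by_contra hc
  push_neg at hc
  have := derivIter_antitone T hc h1
  rw [hμ.1] at this
  exact this

theorem exists_cone_ge {T : Set (List S)} {μ : Ordinal.{v}} (hT : IsBTree T)
    (hμ : hasOrder T μ) {σ : Ordinal.{v}} (hσ : σ < μ) :
    ∃ a : S, [a] ∈ T ∧ σ ≤ (coneOrd T a : Ordinal.{v}) := by
  obtain ⟨t, ht⟩ := Set.nonempty_iff_ne_empty.2 (hμ.2 σ hσ)
  have htT : t ∈ T := derivIter_subset T σ ht
  obtain ⟨a, s, rfl⟩ : ∃ a s, t = a :: s := by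
    cases t with
    | nil => exact absurd htT hT.1
    | cons a s => exact ⟨a, s, rfl⟩
  have haT : [a] ∈ T := hT.2 (by simp) ⟨s, rfl⟩ htT
  refine ⟨a, haT, ?_⟩
  by_contra hc
  push_neg at hc
  have hemp : derivIter (coneSub T a) (coneOrd T a) = ∅ := (hasOrder_coneSub hμ a).1
  cases s with
  | cons b s' =>
    have hproj := derivIter_proj σ (b :: s') (by simp) ht
    have := derivIter_antitone (coneSub T a) (le_of_lt hc) hproj
    rw [hemp] at this
    exact this
  | nil =>
    have h1 : [a] ∈ derivIter T (Order.succ (coneOrd T a)) :=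
      derivIter_antitone T (Order.succ_le_of_lt hc) ht
    rw [derivIter_succ] at h1
    obtain ⟨h2, u, hu, hpp⟩ := h1
    obtain ⟨b, u', rfl⟩ : ∃ b u', u = b :: u' := by
      cases u with
      | nil => exact absurd (List.prefix_nil.1 hpp.1) (by simp)
      | cons b u' => exact ⟨b, u', rfl⟩
    obtain ⟨rfl, hpre⟩ := List.cons_prefix_cons.1 hpp.1
    have hu'ne : u' ≠ [] := fun he => hpp.2 (by rw [he])
    have hproj := derivIter_proj _ u' hu'ne hu
    rw [hemp] at hproj
    exact hproj

/-! ### Full cones -/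

def fullCone (T : Set (List S)) (a : S) : Set (List S) := {l ∈ T | ∃ s, l = a :: s}

theorem fullCone_isBTree {T : Set (List S)} (hT : IsBTree T) (a : S) :
    IsBTree (fullCone T a) := by
  constructor
  · rintro ⟨h, s, hs⟩
    exact absurd hs (by simp)
  · rintro s t hs hst ⟨htT, u, rfl⟩
    obtain ⟨b, s', rfl⟩ : ∃ b s', s = b :: s' := by
      cases s with
      | nil => exact absurd rfl hs
      | cons b s' => exact ⟨b, s', rfl⟩
    obtain ⟨rfl, -⟩ := List.cons_prefix_cons.1 hst
    exact ⟨hT.2 hs hst htT, s', rfl⟩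

theorem maxElems_fullCone {T : Set (List S)} (a : S) :
    maxElems (fullCone T a) ⊆ maxElems T := by
  rintro m ⟨⟨hmT, s, rfl⟩, hmax⟩
  refine ⟨hmT, ?_⟩
  rintro ⟨u, huT, hpp⟩
  obtain ⟨b, u', rfl⟩ : ∃ b u', u = b :: u' := by
    cases u with
    | nil => exact absurd (List.prefix_nil.1 hpp.1) (by simp)
    | cons b u' => exact ⟨b, u', rfl⟩
  obtain ⟨rfl, -⟩ := List.cons_prefix_cons.1 hpp.1
  exact hmax ⟨a :: u', ⟨huT, u', rfl⟩, hpp⟩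

theorem coneSub_fullCone (T : Set (List S)) (a : S) :
    coneSub (fullCone T a) a = coneSub T a := by
  ext s
  constructor
  · rintro ⟨hs, hmem, -⟩
    exact ⟨hs, hmem⟩
  · rintro ⟨hs, hmem⟩
    exact ⟨hs, hmem, s, rfl⟩

theorem hasOrder_fullCone {T : Set (List S)} {μ : Ordinal.{v}} (hμ : hasOrder T μ)
    {a : S} (ha : [a] ∈ T) :
    hasOrder (fullCone T a) (Order.succ (coneOrd T a : Ordinal.{v})) := by
  have hemp : derivIter (coneSub T a) (coneOrd T a) = ∅ := (hasOrder_coneSub hμ a).1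
  constructor
  · ext x
    simp only [Set.mem_empty_iff_false, iff_false]
    intro hx
    obtain ⟨hxT, s, rfl⟩ := derivIter_subset _ _ hx
    cases s with
    | cons b s' =>
      have hx2 : (a :: b :: s') ∈ derivIter (fullCone T a) (coneOrd T a) :=
        derivIter_antitone _ (Order.le_succ _) hx
      have hproj := derivIter_proj _ (b :: s') (by simp) hx2
      rw [coneSub_fullCone, hemp] at hproj
      exact hproj
    | nil =>
      rw [derivIter_succ] at hx
      obtain ⟨h2, u, hu, hpp⟩ := hx
      obtain ⟨b, u', rfl⟩ : ∃ b u', u = b :: u' := by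
        cases u with
        | nil => exact absurd (List.prefix_nil.1 hpp.1) (by simp)
        | cons b u' => exact ⟨b, u', rfl⟩
      obtain ⟨rfl, hpre⟩ := List.cons_prefix_cons.1 hpp.1
      have hu'ne : u' ≠ [] := fun he => hpp.2 (by rw [he])
      have hproj := derivIter_proj _ u' hu'ne hu
      rw [coneSub_fullCone, hemp] at hproj
      exact hproj
  · intro ζ hζ
    have hζ' : ζ ≤ coneOrd T a := Order.lt_succ_iff.1 hζ
    have : [a] ∈ derivIter (fullCone T a) ζ := by
      refine ladder (show [a] ∈ fullCone T a from ⟨ha, [], rfl⟩) ζ ?_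
      rw [coneSub_fullCone]
      exact fun κ hκ => Set.nonempty_iff_ne_empty.2
        ((hasOrder_coneSub hμ a).2 κ (lt_of_lt_of_le hκ hζ'))
    exact fun hemp' => by rw [hemp'] at this; exact this

/-! ### The single-color embedding theorem -/

/-- The trivial coloring. -/
def trivColor : List S → Fin 2 → Set (List S) := fun _ _ => Set.univ

theorem coneSub_max_lift {T : Set (List S)} {a : S} {m : List S}
    (h : m ∈ maxElems (coneSub T a)) : a :: m ∈ maxElems T := by
  refine ⟨h.1.2, ?_⟩
  rintro ⟨u, huT, hpp⟩
  obtain ⟨b, u', rfl⟩ : ∃ b u', u = b :: u' := by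
    cases u with
    | nil => exact absurd (List.prefix_nil.1 hpp.1) (by simp)
    | cons b u' => exact ⟨b, u', rfl⟩
  obtain ⟨rfl, -⟩ := List.cons_prefix_cons.1 hpp.1
  have hmu : ProperPrefix m u' := pp_cons.1 hpp
  have hu'ne : u' ≠ [] := by
    rintro rfl
    exact h.1.1 (List.prefix_nil.1 hmu.1)
  exact h.2 ⟨u', ⟨hu'ne, huT⟩, hmu⟩

theorem GMap_cone_lift_triv {T : Set (List S)} {a : S} (haT : [a] ∈ T)
    {δ : Ordinal.{v}} (h : GMap (coneSub T a) trivColor 0 δ)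
    (hw : ∃ w ∈ maxElems T, [a] <+: w) :
    GMap T trivColor 0 (Order.succ δ) := by
  rcases eq_or_lt_of_le (Ordinal.zero_le δ) with rfl | hδ
  · obtain ⟨w, hw1, hw2⟩ := hw
    exact GMap_single haT hw1 hw2 (Set.mem_univ w)
  · obtain ⟨i, e, h1, h2, h3⟩ := h
    refine GMap_bump hδ haT (fun l => a :: i l) (fun l => a :: e l) ?_ ?_ ?_ ?_
    · exact fun t ht => (h1 t ht).2
    · exact fun s hs t ht hst => pp_cons.2 (h2 s hs t ht hst)
    · intro t ht
      obtain ⟨he1, he2, he3⟩ := h3 t ht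
      exact ⟨coneSub_max_lift he1, List.cons_prefix_cons.2 ⟨rfl, he2⟩, Set.mem_univ _,
        fun s hs hst => Set.mem_univ _⟩
    · intro t ht
      exact ⟨⟨i t, rfl⟩, (cons_ne_single (h1 t ht).1).symm⟩

/-- Every B-tree of order `μ` admits an extended order preserving map from `𝒯_μ`. -/
theorem exists_embed : ∀ μ : Ordinal.{v}, ∀ T : Set (List S), IsBTree T → hasOrder T μ →
    GMap T trivColor 0 μ := by
  intro μ
  induction μ using Ordinal.induction with
  | h μ ih =>
    intro T hT hμ
    rcases Ordinal.zero_or_succ_or_isSuccLimit μ with rfl | ⟨δ, rfl⟩ | hl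
    · exact GMap_zero T _ 0
    · obtain ⟨a, haT, hge⟩ := exists_cone_ge hT hμ (Order.lt_succ δ)
      have hlt : coneOrd T a < Order.succ δ := coneOrd_lt hμ haT
      have heq : coneOrd T a = δ := le_antisymm (Order.lt_succ_iff.1 hlt) hge
      have hsub : GMap (coneSub T a) trivColor 0 δ :=
        ih δ (Order.lt_succ δ) _ (coneSub_isBTree hT a) (heq ▸ hasOrder_coneSub hμ a)
      obtain ⟨w, hw1, hw2⟩ := maxExt hT hμ.1 [a] haT
      exact GMap_cone_lift_triv haT hsub ⟨w, hw1, hw2⟩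
    · refine GMap_merge hl ?_
      intro ζ hζ
      obtain ⟨a, haT, hge⟩ := exists_cone_ge hT hμ hζ
      have hclt : coneOrd T a < μ := coneOrd_lt hμ haT
      have h2 : GMap (fullCone T a) trivColor 0 (Order.succ (coneOrd T a)) :=
        ih _ (hl.succ_lt hclt) _ (fullCone_isBTree hT a) (hasOrder_fullCone hμ haT)
      have h3 : GMap T trivColor 0 (Order.succ (coneOrd T a)) :=
        GMap_mono (fun l hl' => hl'.1) (maxElems_fullCone a) h2
      exact GMap_shrink (Order.succ_le_succ hge) h3

end ColoringSumsProof

namespace ColoringSumsProof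

/-! ### Composition along an extended order preserving map -/

theorem GMap_compose {U : Set (List S)} {C : List S → Fin 2 → Set (List S)}
    {ν : Ordinal.{v}} (I E : List Ordinal.{v} → List S)
    (hI1 : ∀ t ∈ minTree ν, I t ∈ U)
    (hI2 : ∀ s ∈ minTree ν, ∀ t ∈ minTree ν, ProperPrefix s t → ProperPrefix (I s) (I t))
    (hE : ∀ m ∈ maxElems (minTree ν), E m ∈ maxElems U ∧ I m <+: E m)
    {j : Fin 2} {ξ : Ordinal.{v}}
    (h : GMap (minTree ν) (fun t j' => {m | E m ∈ C (I t) j'}) j ξ) :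
    GMap U C j ξ := by
  obtain ⟨i, e, h1, h2, h3⟩ := h
  refine ⟨fun l => I (i l), fun l => E (e l), ?_, ?_, ?_⟩
  · exact fun t ht => hI1 _ (h1 t ht)
  · exact fun s hs t ht hst => hI2 _ (h1 s hs) _ (h1 t ht) (h2 s hs t ht hst)
  · intro t ht
    dsimp only
    obtain ⟨he1, he2, he3⟩ := h3 t ht
    have hem := maxElems_subset _ he1
    refine ⟨(hE _ he1).1, ?_, fun s hs hst => he3 s hs hst⟩
    rcases eq_or_ne (i t) (e t) with heq | hne
    · rw [heq]; exact (hE _ he1).2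
    · exact ((hI2 _ (h1 t (maxElems_subset _ ht)) _ hem ⟨he2, hne⟩).1).trans (hE _ he1).2

/-! ### Building maps at suprema -/

theorem GMap_sup {T : Set (List S)} {C : List S → Fin 2 → Set (List S)} {j : Fin 2}
    {ξ : Ordinal.{v}} (h : ∀ ζ < ξ, ∃ ρ, ζ < ρ ∧ GMap T C j ρ) : GMap T C j ξ := by
  rcases Ordinal.zero_or_succ_or_isSuccLimit ξ with rfl | ⟨η, rfl⟩ | hl
  · exact GMap_zero T C j
  · obtain ⟨ρ, hρ1, hρ2⟩ := h η (Order.lt_succ η)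
    exact GMap_shrink (Order.succ_le_of_lt hρ1) hρ2
  · refine GMap_merge hl fun ζ hζ => ?_
    obtain ⟨ρ, hρ1, hρ2⟩ := h ζ hζ
    exact GMap_shrink (Order.succ_le_of_lt hρ1) hρ2

/-! ### Decompositions of natural sums -/

theorem nadd_decomp : ∀ γ : Ordinal.{v}, ∀ a b c : Ordinal.{v}, a ♯ b = γ → c ≤ γ →
    ∃ a' b', a' ≤ a ∧ b' ≤ b ∧ a' ♯ b' = c := by
  intro γ
  induction γ using Ordinal.induction with
  | h γ ih =>
    intro a b c hab hc
    rcases eq_or_lt_of_le hc with rfl | hlt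
    · exact ⟨a, b, le_rfl, le_rfl, hab⟩
    · rw [← hab] at hlt
      rcases Ordinal.lt_nadd_iff.1 hlt with ⟨a', ha', hle⟩ | ⟨b', hb', hle⟩
      · obtain ⟨a'', b'', h1, h2, h3⟩ :=
          ih (a' ♯ b) (hab ▸ Ordinal.nadd_lt_nadd_right ha' b) a' b c rfl hle
        exact ⟨a'', b'', h1.trans (le_of_lt ha'), h2, h3⟩
      · obtain ⟨a'', b'', h1, h2, h3⟩ :=
          ih (a ♯ b') (hab ▸ Ordinal.nadd_lt_nadd_left hb' a) a b' c rfl hle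
        exact ⟨a'', b'', h1, h2.trans (le_of_lt hb'), h3⟩

/-! ### The witness-closure subtrees -/

/-- The part of `minTree δ` lying below a maximal element whose lift is colored `j`
at the root of `minTree (succ δ)`. -/
def Aset (δ : Ordinal.{v}) (C : List Ordinal.{v} → Fin 2 → Set (List Ordinal.{v}))
    (j : Fin 2) : Set (List Ordinal.{v}) :=
  {t | t ≠ [] ∧ ∃ m, m ∈ maxElems (minTree δ) ∧
    Order.succ δ :: m ∈ C [Order.succ δ] j ∧ t <+: m}

theorem Aset_isBTree (δ : Ordinal.{v}) (C) (j : Fin 2) : IsBTree (Aset δ C j) := by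
  refine ⟨fun h => h.1 rfl, ?_⟩
  rintro s t hs hst ⟨ht, m, hm1, hm2, hm3⟩
  exact ⟨hs, m, hm1, hm2, hst.trans hm3⟩

theorem Aset_subset (δ : Ordinal.{v}) (C) (j : Fin 2) : Aset δ C j ⊆ minTree δ := by
  rintro t ⟨ht, m, hm1, hm2, hm3⟩
  exact (minTree_isBTree δ).2 ht hm3 (maxElems_subset _ hm1)

theorem Aset_union (δ : Ordinal.{v}) (C)
    (hcov : ∀ t ∈ minTree (Order.succ δ), ∀ m ∈ maxElems (minTree (Order.succ δ)),
      t <+: m → m ∈ C t 0 ∪ C t 1) :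
    Aset δ C 0 ∪ Aset δ C 1 = minTree δ := by
  apply Set.Subset.antisymm
  · rintro t (h | h)
    exacts [Aset_subset δ C 0 h, Aset_subset δ C 1 h]
  · intro t ht
    obtain ⟨m, hm, htm⟩ := maxExt (minTree_isBTree δ) (minTree_rank_upper δ) t ht
    have hc := hcov [Order.succ δ] (minTree_root_mem δ) (Order.succ δ :: m)
      (maxElems_cons hm) ⟨m, rfl⟩
    have htne := minTree_ne_nil _ _ ht
    rcases hc with hc | hc
    · exact Or.inl ⟨htne, m, hm, hc, htm⟩
    · exact Or.inr ⟨htne, m, hm, hc, htm⟩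

theorem Aset_maxElems {δ : Ordinal.{v}} {C} {j : Fin 2} {m : List Ordinal.{v}}
    (h : m ∈ maxElems (Aset δ C j)) :
    m ∈ maxElems (minTree δ) ∧ Order.succ δ :: m ∈ C [Order.succ δ] j := by
  obtain ⟨⟨hne, m', hm'1, hm'2, hm'3⟩, hmax⟩ := h
  rcases eq_or_ne m m' with rfl | hnem
  · exact ⟨hm'1, hm'2⟩
  · exfalso
    refine hmax ⟨m', ⟨minTree_ne_nil _ _ (maxElems_subset _ hm'1), m', hm'1, hm'2,
      List.prefix_refl m'⟩, hm'3, hnem⟩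

theorem hasOrder_Aset {δ : Ordinal.{v}} {C} {j : Fin 2}
    (hdich : ∀ σ < δ, (derivIter (Aset δ C j) σ).Nonempty) :
    hasOrder (Aset δ C j) δ := by
  constructor
  · have h1 := derivIter_mono (Aset_subset δ C j) δ
    rw [minTree_rank_upper δ] at h1
    exact Set.eq_empty_iff_forall_notMem.2 fun x hx => h1 hx
  · exact fun ζ hζ => Set.nonempty_iff_ne_empty.1 (hdich ζ hζ)

/-! ### The successor step -/

theorem mt_succ_core {δ : Ordinal.{v}} (hδ : 0 < δ)
    (C : List Ordinal.{v} → Fin 2 → Set (List Ordinal.{v}))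
    (hcov : ∀ t ∈ minTree (Order.succ δ), ∀ m ∈ maxElems (minTree (Order.succ δ)),
      t <+: m → m ∈ C t 0 ∪ C t 1)
    (IH : ∀ D : List Ordinal.{v} → Fin 2 → Set (List Ordinal.{v}),
      (∀ t ∈ minTree δ, ∀ m ∈ maxElems (minTree δ), t <+: m → m ∈ D t 0 ∪ D t 1) →
      ∃ a₀ a₁ : Ordinal.{v}, a₀ ♯ a₁ = δ ∧ GMap (minTree δ) D 0 a₀ ∧ GMap (minTree δ) D 1 a₁)
    (j₀ : Fin 2)
    (hdich : ∀ σ < δ, (derivIter (Aset δ C j₀) σ).Nonempty) :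
    ∃ ξ₀ ξ₁ : Ordinal.{v}, ξ₀ ♯ ξ₁ = Order.succ δ ∧
      GMap (minTree (Order.succ δ)) C 0 ξ₀ ∧ GMap (minTree (Order.succ δ)) C 1 ξ₁ := by
  obtain ⟨I, E, hI1, hI2, hE3⟩ :=
    exists_embed δ (Aset δ C j₀) (Aset_isBTree δ C j₀) (hasOrder_Aset hdich)
  set H : List Ordinal.{v} → List Ordinal.{v} := fun l => Order.succ δ :: I l with hH
  set Eh : List Ordinal.{v} → List Ordinal.{v} := fun l => Order.succ δ :: E l with hEh
  have hIne : ∀ t ∈ minTree δ, I t ≠ [] := fun t ht => (hI1 t ht).1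
  have hImem : ∀ t ∈ minTree δ, I t ∈ minTree δ := fun t ht => Aset_subset δ C j₀ (hI1 t ht)
  have hEmax : ∀ m ∈ maxElems (minTree δ),
      E m ∈ maxElems (minTree δ) ∧ Order.succ δ :: E m ∈ C [Order.succ δ] j₀ := by
    intro m hm
    exact Aset_maxElems (hE3 m hm).1
  have hH1 : ∀ t ∈ minTree δ, H t ∈ minTree (Order.succ δ) :=
    fun t ht => minTree_cons_mem (hImem t ht)
  have hH2 : ∀ s ∈ minTree δ, ∀ t ∈ minTree δ,
      ProperPrefix s t → ProperPrefix (H s) (H t) :=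
    fun s hs t ht hst => pp_cons.2 (hI2 s hs t ht hst)
  have hHE : ∀ m ∈ maxElems (minTree δ),
      Eh m ∈ maxElems (minTree (Order.succ δ)) ∧ H m <+: Eh m := by
    intro m hm
    exact ⟨maxElems_cons (hEmax m hm).1,
      List.cons_prefix_cons.2 ⟨rfl, (hE3 m hm).2.1⟩⟩
  set D : List Ordinal.{v} → Fin 2 → Set (List Ordinal.{v}) :=
    fun t j' => {m | Eh m ∈ C (H t) j'} with hD
  have hcovD : ∀ t ∈ minTree δ, ∀ m ∈ maxElems (minTree δ), t <+: m → m ∈ D t 0 ∪ D t 1 := by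
    intro t ht m hm htm
    have h1 : H t <+: Eh m := by
      rcases eq_or_ne t m with rfl | hne
      · exact (hHE t hm).2
      · exact ((hH2 t ht m (maxElems_subset _ hm) ⟨htm, hne⟩).1).trans (hHE m hm).2
    exact hcov (H t) (hH1 t ht) (Eh m) (hHE m hm).1 h1
  obtain ⟨a₀, a₁, hsum, hg0, hg1⟩ := IH D hcovD
  have hplain : ∀ (j : Fin 2) (a : Ordinal.{v}), GMap (minTree δ) D j a →
      GMap (minTree (Order.succ δ)) C j a := by
    intro j a hga
    exact GMap_compose H Eh hH1 hH2 (fun m hm => hHE m hm) hga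
  have hbump : ∀ a : Ordinal.{v}, GMap (minTree δ) D j₀ a →
      GMap (minTree (Order.succ δ)) C j₀ (Order.succ a) := by
    intro a hga
    rcases eq_or_lt_of_le (Ordinal.zero_le a) with rfl | ha
    · obtain ⟨m₀, hm₀⟩ : ∃ m₀, m₀ ∈ maxElems (minTree δ) := by
        obtain ⟨x, hx⟩ := minTree_nonempty hδ
        obtain ⟨m₀, hm₀, -⟩ := maxExt (minTree_isBTree δ) (minTree_rank_upper δ) x hx
        exact ⟨m₀, hm₀⟩
      exact GMap_single (minTree_root_mem δ) (hHE m₀ hm₀).1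
        ⟨E m₀, rfl⟩ (hEmax m₀ hm₀).2
    · obtain ⟨i, e, h1, h2, h3⟩ := hga
      refine GMap_bump ha (minTree_root_mem δ) (fun l => H (i l)) (fun l => Eh (e l))
        ?_ ?_ ?_ ?_
      · exact fun t ht => hH1 _ (h1 t ht)
      · exact fun s hs t ht hst => hH2 _ (h1 s hs) _ (h1 t ht) (h2 s hs t ht hst)
      · intro t ht
        obtain ⟨he1, he2, he3⟩ := h3 t ht
        have hprefix : H (i t) <+: Eh (e t) := by
          rcases eq_or_ne (i t) (e t) with heq | hne
          · rw [heq]; exact (hHE _ he1).2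
          · exact ((hH2 _ (h1 t (maxElems_subset _ ht)) _ (maxElems_subset _ he1)
              ⟨he2, hne⟩).1).trans (hHE _ he1).2
        exact ⟨(hHE _ he1).1, hprefix, (hEmax _ he1).2, fun s hs hst => he3 s hs hst⟩
      · intro t ht
        exact ⟨⟨I (i t), rfl⟩, (cons_ne_single (hIne _ (h1 t ht))).symm⟩
  fin_cases j₀
  · exact ⟨Order.succ a₀, a₁, by rw [Ordinal.succ_nadd, hsum], hbump a₀ hg0,
      hplain 1 a₁ hg1⟩
  · exact ⟨a₀, Order.succ a₁, by rw [Ordinal.nadd_succ, hsum], hplain 0 a₀ hg0,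
      hbump a₁ hg1⟩

end ColoringSumsProof

namespace ColoringSumsProof

/-! ### The coloring theorem for minimal trees -/

theorem nadd_le_left {a b : Ordinal.{v}} : a ≤ a ♯ b := by
  calc a = a ♯ 0 := (Ordinal.nadd_zero a).symm
  _ ≤ a ♯ b := Ordinal.nadd_le_nadd_left (Ordinal.zero_le b) a

theorem nadd_le_right {a b : Ordinal.{v}} : b ≤ a ♯ b := by
  calc b = 0 ♯ b := (Ordinal.zero_nadd b).symm
  _ ≤ a ♯ b := Ordinal.nadd_le_nadd_right (Ordinal.zero_le a) b

theorem mt_theorem : ∀ μ : Ordinal.{v},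
    ∀ C : List Ordinal.{v} → Fin 2 → Set (List Ordinal.{v}),
    (∀ t ∈ minTree μ, ∀ m ∈ maxElems (minTree μ), t <+: m → m ∈ C t 0 ∪ C t 1) →
    ∃ ξ₀ ξ₁ : Ordinal.{v}, ξ₀ ♯ ξ₁ = μ ∧ GMap (minTree μ) C 0 ξ₀ ∧ GMap (minTree μ) C 1 ξ₁ := by
  intro μ
  induction μ using Ordinal.induction with
  | h μ ih =>
    intro C hcov
    rcases Ordinal.zero_or_succ_or_isSuccLimit μ with rfl | ⟨δ, rfl⟩ | hl
    · exact ⟨0, 0, Ordinal.nadd_zero 0, GMap_zero _ _ _, GMap_zero _ _ _⟩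
    · rcases eq_or_lt_of_le (Ordinal.zero_le δ) with rfl | hδ
      · -- μ = succ 0
        have hroot := minTree_root_mem (0 : Ordinal.{v})
        have hmax : [Order.succ (0 : Ordinal.{v})] ∈ maxElems (minTree (Order.succ 0)) :=
          maxElems_one.2 rfl
        have hc := hcov _ hroot _ hmax (List.prefix_refl _)
        rcases hc with hc | hc
        · exact ⟨Order.succ 0, 0, Ordinal.nadd_zero _,
            GMap_single hroot hmax (List.prefix_refl _) hc, GMap_zero _ _ _⟩
        · exact ⟨0, Order.succ 0, Ordinal.zero_nadd _, GMap_zero _ _ _,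
            GMap_single hroot hmax (List.prefix_refl _) hc⟩
      · -- μ = succ δ, δ > 0
        have hIH := ih δ (Order.lt_succ δ)
        rcases union_dichotomy δ (Aset δ C 0) (Aset δ C 1) (Aset_isBTree _ _ _)
          (Aset_isBTree _ _ _) (Aset_union δ C hcov) with h | h
        · exact mt_succ_core hδ C hcov hIH 0 h
        · exact mt_succ_core hδ C hcov hIH 1 h
    · -- μ limit
      have hres : ∀ δ, δ < μ → ∃ p : Ordinal.{v} × Ordinal.{v}, p.1 ♯ p.2 = Order.succ δ ∧
          GMap (minTree μ) C 0 p.1 ∧ GMap (minTree μ) C 1 p.2 := by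
        intro δ hδ
        have hsub : minTree (Order.succ δ) ⊆ minTree μ :=
          fun l hl' => (mem_minTree_limit hl).2 ⟨δ, hδ, hl'⟩
        have hmaxsub : maxElems (minTree (Order.succ δ)) ⊆ maxElems (minTree μ) :=
          fun l hl' => (maxElems_limit hl).2 ⟨δ, hδ, hl'⟩
        have hcov' : ∀ t ∈ minTree (Order.succ δ), ∀ m ∈ maxElems (minTree (Order.succ δ)),
            t <+: m → m ∈ C t 0 ∪ C t 1 :=
          fun t ht m hm htm => hcov t (hsub ht) m (hmaxsub hm) htm
        obtain ⟨p0, p1, hp, h0, h1⟩ := ih (Order.succ δ) (hl.succ_lt hδ) C hcov'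
        exact ⟨(p0, p1), hp, GMap_mono hsub hmaxsub h0, GMap_mono hsub hmaxsub h1⟩
      choose p hp h0 h1 using hres
      have hboundp : ∀ δ (h : δ < μ), (p δ h).1 ≤ μ ∧ (p δ h).2 ≤ μ := by
        intro δ h
        constructor
        · exact le_trans (le_trans nadd_le_left (le_of_eq (hp δ h)))
            (Order.succ_le_of_lt h)
        · exact le_trans (le_trans nadd_le_right (le_of_eq (hp δ h)))
            (Order.succ_le_of_lt h)
      set SX : Set Ordinal.{v} := {o | ∃ δ, ∃ h : δ < μ, o = (p δ h).1} with hSX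
      set SY : Set Ordinal.{v} := {o | ∃ δ, ∃ h : δ < μ, o = (p δ h).2} with hSY
      have hbddX : BddAbove SX := by
        refine ⟨μ, ?_⟩
        rintro o ⟨δ, hδ, rfl⟩
        exact (hboundp δ hδ).1
      have hbddY : BddAbove SY := by
        refine ⟨μ, ?_⟩
        rintro o ⟨δ, hδ, rfl⟩
        exact (hboundp δ hδ).2
      have hXle : ∀ δ (h : δ < μ), (p δ h).1 ≤ sSup SX :=
        fun δ h => le_csSup hbddX ⟨δ, h, rfl⟩
      have hYle : ∀ δ (h : δ < μ), (p δ h).2 ≤ sSup SY :=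
        fun δ h => le_csSup hbddY ⟨δ, h, rfl⟩
      have hμle : μ ≤ sSup SX ♯ sSup SY := by
        by_contra hc
        push_neg at hc
        have h2 : Order.succ (sSup SX ♯ sSup SY) ≤ sSup SX ♯ sSup SY := by
          calc Order.succ (sSup SX ♯ sSup SY) = (p _ hc).1 ♯ (p _ hc).2 := (hp _ hc).symm
          _ ≤ sSup SX ♯ sSup SY := Ordinal.nadd_le_nadd (hXle _ hc) (hYle _ hc)
        exact absurd h2 (not_le.2 (Order.lt_succ _))
      obtain ⟨ξ₀, ξ₁, hle0, hle1, hsum⟩ := nadd_decomp (sSup SX ♯ sSup SY) _ _ μ rfl hμle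
      have hSXne : SX.Nonempty := ⟨(p 0 hl.pos).1, 0, hl.pos, rfl⟩
      have hSYne : SY.Nonempty := ⟨(p 0 hl.pos).2, 0, hl.pos, rfl⟩
      refine ⟨ξ₀, ξ₁, hsum, ?_, ?_⟩
      · refine GMap_sup fun ζ hζ => ?_
        obtain ⟨o, ⟨δ, hδ, rfl⟩, ho⟩ :=
          exists_lt_of_lt_csSup hSXne (lt_of_lt_of_le hζ hle0)
        exact ⟨(p δ hδ).1, ho, h0 δ hδ⟩
      · refine GMap_sup fun ζ hζ => ?_
        obtain ⟨o, ⟨δ, hδ, rfl⟩, ho⟩ :=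
          exists_lt_of_lt_csSup hSYne (lt_of_lt_of_le hζ hle1)
        exact ⟨(p δ hδ).2, ho, h1 δ hδ⟩

end ColoringSumsProof

open ColoringSumsProof in
/-- Coloring sums: for any coloring of a well-founded `B`-tree `T` of order `μ`,
there are ordinals `ξ_0 ⊕ ξ_1 = μ` and, for each `j`, an extended order preserving
map of `𝒯_{ξ_j}` into `T` whose induced coloring is monochromatically `j`. -/
theorem coloring_sums {S : Type*} (T : Set (List S)) (hT : IsBTree T)
    (μ : Ordinal) (hμ : hasOrder T μ)
    (C : List S → Fin 2 → Set (List S))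
    (hC : ∀ t ∈ T, {s : List S | s ∈ maxElems T ∧ t <+: s} = C t 0 ∪ C t 1) :
    ∃ x : Fin 2 → Ordinal, x 0 ♯ x 1 = μ ∧
      ∀ j : Fin 2, ∃ i e : List Ordinal → List S,
        (∀ t ∈ minTree (x j), i t ∈ T) ∧
        (∀ s ∈ minTree (x j), ∀ t ∈ minTree (x j),
          ProperPrefix s t → ProperPrefix (i s) (i t)) ∧
        (∀ t ∈ maxElems (minTree (x j)),
          e t ∈ maxElems T ∧ i t <+: e t ∧
          ∀ k < t.length, e t ∈ C (i (t.take (k + 1))) j) := by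
  obtain ⟨I, E, hI1, hI2, hE3⟩ := exists_embed μ T hT hμ
  have hcovD : ∀ t ∈ minTree μ, ∀ m ∈ maxElems (minTree μ), t <+: m →
      m ∈ (fun t (j' : Fin 2) => {m | E m ∈ C (I t) j'}) t 0 ∪
        (fun t (j' : Fin 2) => {m | E m ∈ C (I t) j'}) t 1 := by
    intro t ht m hm htm
    have h1 : I t <+: E m := by
      rcases eq_or_ne t m with rfl | hne
      · exact (hE3 t hm).2.1
      · exact (hI2 t ht m (maxElems_subset _ hm) ⟨htm, hne⟩).1.trans (hE3 m hm).2.1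
    have h2 : E m ∈ {s | s ∈ maxElems T ∧ I t <+: s} := ⟨(hE3 m hm).1, h1⟩
    rw [hC (I t) (hI1 t ht)] at h2
    exact h2
  obtain ⟨ξ₀, ξ₁, hsum, h0, h1⟩ :=
    mt_theorem μ (fun t (j' : Fin 2) => {m | E m ∈ C (I t) j'}) hcovD
  refine ⟨![ξ₀, ξ₁], ?_, ?_⟩
  · simpa using hsum
  · intro j
    have hg : GMap T C j (![ξ₀, ξ₁] j) := by
      fin_cases j
      · simpa using GMap_compose I E hI1 hI2
          (fun m hm => ⟨(hE3 m hm).1, (hE3 m hm).2.1⟩) h0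
      · simpa using GMap_compose I E hI1 hI2
          (fun m hm => ⟨(hE3 m hm).1, (hE3 m hm).2.1⟩) h1
    obtain ⟨i, e, g1, g2, g3⟩ := hg
    refine ⟨i, e, g1, g2, ?_⟩
    intro t ht
    obtain ⟨he1, he2, he3⟩ := g3 t ht
    refine ⟨he1, he2, ?_⟩
    intro k hk
    have htmem := maxElems_subset _ ht
    have hne : t ≠ [] := minTree_ne_nil _ _ htmem
    have hs1 : t.take (k + 1) ≠ [] := by
      simp [List.take_eq_nil_iff, hne]
    exact he3 _ ((minTree_isBTree _).2 hs1 (List.take_prefix _ t) htmem)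
      (List.take_prefix _ t)
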